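/- Let a > 0 and L be real numbers, and let f : (0,∞) → ℝ be a continuous nonnegative function such that t (log t)² f(t) → L as t → ∞. Then t (log t)² e^{a t} ∫_t^∞ e^{−a s} f(s) ds → L/a as t → ∞. -/

import Mathlib

open MeasureTheory

set_option maxHeartbeats 800000

section Aux
open Set Filter Real Topology

lemma phi_mono' {s u : ℝ} (hs : 1 ≤ s) (hsu : s ≤ u) :
    s * Real.log s ^ 2 ≤ u * Real.log u ^ 2 := by
  have h1 : (0:ℝ) ≤ Real.log s := Real.log_nonneg hs
  have h2 : Real.log s ≤ Real.log u := Real.log_le_log (by linarith) hsu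
  exact mul_le_mul hsu (pow_le_pow_left₀ h1 h2 2) (by positivity) (by linarith)

lemma phi_pos' {s : ℝ} (hs : 2 ≤ s) : 0 < s * Real.log s ^ 2 := by
  have : (0:ℝ) < Real.log s := Real.log_pos (by linarith)
  positivity

lemma exp_deriv_aux (a : ℝ) (ha : a ≠ 0) (x : ℝ) :
    HasDerivAt (fun s : ℝ => -(Real.exp (-a * s) / a)) (Real.exp (-a * x)) x := by
  have h1 : HasDerivAt (fun s : ℝ => -a * s) (-a) x := by
    simpa using (hasDerivAt_id x).const_mul (-a)
  have h2 := (Real.hasDerivAt_exp (-a * x)).comp x h1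
  have h3 := (h2.div_const a).neg
  have e : -(Real.exp (-a * x) * -a / a) = Real.exp (-a * x) := by field_simp
  rw [e] at h3
  exact h3

lemma tendsto_neg_mul_atBot {a : ℝ} (ha : 0 < a) :
    Tendsto (fun s : ℝ => -a * s) atTop atBot := by
  have h := (tendsto_id (α := ℝ)).const_mul_atTop ha
  have := tendsto_neg_atBot_iff.mpr h
  exact this.congr (by intro x; simp [neg_mul])

lemma integral_exp_neg_mul_Ioi' {a : ℝ} (ha : 0 < a) (t : ℝ) :
    ∫ s in Set.Ioi t, Real.exp (-a * s) = Real.exp (-a * t) / a := by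
  have hlim : Tendsto (fun s : ℝ => -(Real.exp (-a * s) / a)) atTop (𝓝 0) := by
    have := (Real.tendsto_exp_atBot.comp (tendsto_neg_mul_atBot ha)).div_const a
    simpa [Function.comp] using this.neg
  have := integral_Ioi_of_hasDerivAt_of_tendsto'
    (f := fun s : ℝ => -(Real.exp (-a * s) / a)) (f' := fun s => Real.exp (-a * s))
    (fun x _ => exp_deriv_aux a ha.ne' x) (exp_neg_integrableOn_Ioi t ha) hlim
  rw [this]; ring

lemma integral_exp_neg_mul_Ioc' {a : ℝ} (ha : 0 < a) (t c : ℝ) (hc : 0 ≤ c) :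
    ∫ s in Set.Ioc t (t + c), Real.exp (-a * s)
      = Real.exp (-a * t) / a - Real.exp (-a * (t + c)) / a := by
  rw [← intervalIntegral.integral_of_le (by linarith)]
  rw [intervalIntegral.integral_eq_sub_of_hasDerivAt
    (fun x _ => exp_deriv_aux a ha.ne' x)
    ((Continuous.intervalIntegrable (by continuity) _ _))]
  ring


lemma ratio_tendsto' (c : ℝ) :
    Tendsto (fun t : ℝ => (t * Real.log t ^ 2) / ((t + c) * Real.log (t + c) ^ 2))
      atTop (𝓝 1) := by
  have hc0 : Tendsto (fun t : ℝ => c / t) atTop (𝓝 0) :=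
    Tendsto.div_atTop tendsto_const_nhds tendsto_id
  have hplus : Tendsto (fun t : ℝ => 1 + c / t) atTop (𝓝 1) := by
    simpa using (tendsto_const_nhds (x := (1:ℝ)) (f := atTop)).add hc0
  -- t/(t+c) → 1
  have h1 : Tendsto (fun t : ℝ => t / (t + c)) atTop (𝓝 1) := by
    have hinv : Tendsto (fun t : ℝ => (1 + c / t)⁻¹) atTop (𝓝 1) := by
      simpa using hplus.inv₀ one_ne_zero
    apply hinv.congr'
    filter_upwards [eventually_gt_atTop (max 0 (-c)), eventually_gt_atTop 0] with t ht ht0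
    have htc : 0 < t + c := by
      have := lt_of_le_of_lt (le_max_right 0 (-c)) ht; linarith
    field_simp
  -- log t / log (t+c) → 1
  have h2 : Tendsto (fun t : ℝ => Real.log t / Real.log (t + c)) atTop (𝓝 1) := by
    have hlogtc : Tendsto (fun t : ℝ => Real.log (t + c)) atTop atTop :=
      Real.tendsto_log_atTop.comp (tendsto_atTop_add_const_right _ c tendsto_id)
    have hnum : Tendsto (fun t : ℝ => Real.log (1 + c / t)) atTop (𝓝 0) := by
      have := ((Real.continuousAt_log (x := 1) one_ne_zero).tendsto).comp hplus
      simpa [Function.comp_def] using this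
    have hfrac : Tendsto (fun t : ℝ => Real.log (1 + c / t) / Real.log (t + c)) atTop (𝓝 0) :=
      Tendsto.div_atTop hnum hlogtc
    have := (tendsto_const_nhds (x := (1:ℝ)) (f := atTop)).sub hfrac
    apply Tendsto.congr' _ (by simpa using this)
    filter_upwards [eventually_gt_atTop (max 1 (1 - c))] with t ht
    have ht1 : 1 < t := lt_of_le_of_lt (le_max_left _ _) ht
    have htc : 1 < t + c := by
      have := lt_of_le_of_lt (le_max_right 1 (1 - c)) ht; linarith
    have hlog : Real.log (1 + c / t) = Real.log (t + c) - Real.log t := by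
      rw [show (1 + c / t) = (t + c) / t by field_simp, Real.log_div (by linarith) (by linarith)]
    rw [hlog]
    have hne : Real.log (t + c) ≠ 0 := ne_of_gt (Real.log_pos htc)
    field_simp
    ring
  have := h1.mul ((h2.pow 2))
  apply Tendsto.congr' _ (by simpa using this)
  filter_upwards with t
  rw [div_pow, div_mul_div_comm]


/-- Let `a > 0` and `L` be real numbers, and let `f : (0,∞) → ℝ` be a continuous
nonnegative function such that `t (log t)² f(t) → L` as `t → ∞`.  Then
`t (log t)² e^(at) ∫_t^∞ e^(−as) f(s) ds → L/a` as `t → ∞`. -/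
theorem tail_integral_asymptotics_log (a L : ℝ) (ha : 0 < a)
    (f : ℝ → ℝ) (hf : ContinuousOn f (Set.Ioi 0)) (hf0 : ∀ t ∈ Set.Ioi (0 : ℝ), 0 ≤ f t)
    (hlim : Filter.Tendsto (fun t : ℝ => t * Real.log t ^ 2 * f t) Filter.atTop (nhds L)) :
    Filter.Tendsto
      (fun t : ℝ => t * Real.log t ^ 2 * Real.exp (a * t) *
        ∫ s in Set.Ioi t, Real.exp (-a * s) * f s)
      Filter.atTop (nhds (L / a)) := by
  have hL : 0 ≤ L := ge_of_tendsto hlim (by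
    filter_upwards [eventually_gt_atTop (0:ℝ)] with t ht
    have := hf0 t ht
    positivity)
  -- global bound for integrability
  obtain ⟨T₀', hT₀'⟩ := Metric.tendsto_atTop.mp hlim 1 one_pos
  set T₀ : ℝ := max T₀' 2 with hT₀def
  have hT₀2 : (2:ℝ) ≤ T₀ := le_max_right _ _
  set C : ℝ := (|L| + 1) / (T₀ * Real.log T₀ ^ 2) with hCdef
  have hφT₀ : 0 < T₀ * Real.log T₀ ^ 2 := phi_pos' hT₀2
  have hbound : ∀ s, T₀ ≤ s → f s ≤ C := by
    intro s hs
    have hs2 : (2:ℝ) ≤ s := le_trans hT₀2 hs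
    have hfs : 0 ≤ f s := hf0 s (by simp; linarith)
    have h1 : |s * Real.log s ^ 2 * f s - L| < 1 := by
      simpa [Real.dist_eq] using hT₀' s (le_trans (le_max_left _ _) hs)
    have h2 : s * Real.log s ^ 2 * f s ≤ |L| + 1 := by
      have := abs_sub_abs_le_abs_sub (s * Real.log s ^ 2 * f s) L
      have h3 : |s * Real.log s ^ 2 * f s| = s * Real.log s ^ 2 * f s := abs_of_nonneg (by
        have := phi_pos' hs2; positivity)
      rw [h3] at this; linarith [le_of_lt h1, le_abs_self (s * Real.log s ^ 2 * f s - L)]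
    have h4 : T₀ * Real.log T₀ ^ 2 * f s ≤ s * Real.log s ^ 2 * f s :=
      mul_le_mul_of_nonneg_right (phi_mono' (by linarith) hs) hfs
    rw [hCdef, le_div_iff₀ hφT₀]
    nlinarith
  have hint : ∀ t, T₀ ≤ t → IntegrableOn (fun s => Real.exp (-a * s) * f s) (Set.Ioi t) := by
    intro t ht
    have ht0 : (0:ℝ) < t := by linarith
    apply Integrable.mono' ((exp_neg_integrableOn_Ioi t ha).const_mul C)
    · apply ContinuousOn.aestronglyMeasurable _ measurableSet_Ioi
      exact ((Real.continuous_exp.comp (continuous_const.mul continuous_id)).continuousOn).mul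
        (hf.mono (fun s hs => by simp at hs ⊢; linarith))
    · refine (ae_restrict_iff' measurableSet_Ioi).2 (ae_of_all _ fun s hs => ?_)
      simp only [Set.mem_Ioi] at hs
      have hfs : 0 ≤ f s := hf0 s (by simp; linarith)
      have hC : f s ≤ C := hbound s (by linarith)
      have he : 0 < Real.exp (-a * s) := Real.exp_pos _
      rw [Real.norm_eq_abs, abs_of_nonneg (by positivity)]
      nlinarith
  rw [tendsto_order]
  constructor
  · -- lower bound : ∀ b < L/a, eventually b < expr
    intro b hb
    obtain ⟨ε, hε, c, hc, hkey⟩ : ∃ ε > 0, ∃ c > 0,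
        b < max (L - ε) 0 * (1 - Real.exp (-a * c)) / a := by
      by_cases hb0 : b < 0
      · refine ⟨1, one_pos, 1, one_pos, lt_of_lt_of_le hb0 ?_⟩
        have h1 : Real.exp (-a * 1) < 1 := Real.exp_lt_one_iff.mpr (by linarith)
        exact div_nonneg (mul_nonneg (le_max_right _ _) (by linarith)) ha.le
      · push_neg at hb0
        have hab : a * b < L := by
          have := (lt_div_iff₀ ha).1 hb; linarith
        have hab0 : 0 ≤ a * b := by positivity
        set δ : ℝ := (L - a * b) / 3 with hδdef
        have hδ : 0 < δ := by rw [hδdef]; linarith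
        have hL' : 0 < L := lt_of_le_of_lt hab0 hab
        have hδL : δ < L := by rw [hδdef]; linarith
        have hc0 : Tendsto (fun c : ℝ => Real.exp (-a * c)) atTop (𝓝 0) :=
          Real.tendsto_exp_atBot.comp (tendsto_neg_mul_atBot ha)
        obtain ⟨c, hc1, hc2⟩ := ((hc0.eventually
          (eventually_lt_nhds (show (0:ℝ) < δ / L by positivity))).and
          (eventually_ge_atTop 1)).exists
        refine ⟨δ, hδ, c, by linarith, ?_⟩
        rw [max_eq_left (by linarith), lt_div_iff₀ ha]
        have hE0 : 0 < Real.exp (-a * c) := Real.exp_pos _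
        have hE : Real.exp (-a * c) * L < δ := (lt_div_iff₀ hL').1 hc1
        nlinarith
    set m : ℝ := max (L - ε) 0 with hmdef
    have hm : 0 ≤ m := le_max_right _ _
    have hG : Tendsto (fun t : ℝ => m * (1 - Real.exp (-a * c)) / a *
        ((t * Real.log t ^ 2) / ((t + c) * Real.log (t + c) ^ 2)))
        atTop (𝓝 (m * (1 - Real.exp (-a * c)) / a)) := by
      simpa using tendsto_const_nhds.mul (ratio_tendsto' c)
    obtain ⟨T₁, hT₁⟩ := Metric.tendsto_atTop.mp hlim ε hε
    filter_upwards [hG.eventually (eventually_gt_nhds hkey),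
      eventually_ge_atTop (max T₁ T₀)] with t hGt ht
    have htT₁ : T₁ ≤ t := le_trans (le_max_left _ _) ht
    have htT₀ : T₀ ≤ t := le_trans (le_max_right _ _) ht
    have ht2 : (2:ℝ) ≤ t := le_trans hT₀2 htT₀
    have hφt : 0 < t * Real.log t ^ 2 := phi_pos' ht2
    have hφtc : 0 < (t + c) * Real.log (t + c) ^ 2 := phi_pos' (by linarith)
    refine lt_of_lt_of_le hGt ?_
    -- expr t ≥ G t
    have step1 : ∫ s in Set.Ioc t (t + c), Real.exp (-a * s) * (m / ((t + c) * Real.log (t + c) ^ 2))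
        ≤ ∫ s in Set.Ioc t (t + c), Real.exp (-a * s) * f s := by
      apply setIntegral_mono_on
      · exact ((Real.continuous_exp.comp (continuous_const.mul continuous_id)).mul
          continuous_const).integrableOn_Ioc
      · exact (hint t htT₀).mono_set Set.Ioc_subset_Ioi_self
      · exact measurableSet_Ioc
      · intro s hs
        obtain ⟨hs1, hs2⟩ := hs
        have hs0 : (0:ℝ) < s := by linarith
        have hfs : 0 ≤ f s := hf0 s (by simpa using hs0)
        have hφs : 0 < s * Real.log s ^ 2 := phi_pos' (by linarith)
        have h1 : |s * Real.log s ^ 2 * f s - L| < ε := by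
          simpa [Real.dist_eq] using hT₁ s (by linarith)
        have h2 : L - ε < s * Real.log s ^ 2 * f s := by
          have := abs_lt.1 h1; linarith [this.1]
        have h3 : m ≤ s * Real.log s ^ 2 * f s := max_le h2.le (by positivity)
        have h4 : s * Real.log s ^ 2 * f s ≤ (t + c) * Real.log (t + c) ^ 2 * f s :=
          mul_le_mul_of_nonneg_right (phi_mono' (by linarith) hs2) hfs
        have h5 : m / ((t + c) * Real.log (t + c) ^ 2) ≤ f s := by
          rw [div_le_iff₀ hφtc]; nlinarith
        exact mul_le_mul_of_nonneg_left h5 (Real.exp_pos _).le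
    have step2 : ∫ s in Set.Ioc t (t + c), Real.exp (-a * s) * f s
        ≤ ∫ s in Set.Ioi t, Real.exp (-a * s) * f s := by
      apply setIntegral_mono_set (hint t htT₀)
      · refine (ae_restrict_iff' measurableSet_Ioi).2 (ae_of_all _ fun s hs => ?_)
        simp only [Set.mem_Ioi] at hs
        have hfs : 0 ≤ f s := hf0 s (by simp; linarith)
        positivity
      · exact HasSubset.Subset.eventuallyLE Set.Ioc_subset_Ioi_self
    have lhs_eq : ∫ s in Set.Ioc t (t + c), Real.exp (-a * s) * (m / ((t + c) * Real.log (t + c) ^ 2))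
        = (Real.exp (-a * t) / a - Real.exp (-a * (t + c)) / a) * (m / ((t + c) * Real.log (t + c) ^ 2)) := by
      rw [integral_mul_const, integral_exp_neg_mul_Ioc' ha t c hc.le]
    have hFge : (Real.exp (-a * t) / a - Real.exp (-a * (t + c)) / a) * (m / ((t + c) * Real.log (t + c) ^ 2))
        ≤ ∫ s in Set.Ioi t, Real.exp (-a * s) * f s := by
      rw [← lhs_eq]; exact le_trans step1 step2
    have e1 : Real.exp (a * t) * Real.exp (-a * t) = 1 := by
      rw [← Real.exp_add]; ring_nf; exact Real.exp_zero
    have e2 : Real.exp (a * t) * Real.exp (-a * (t + c)) = Real.exp (-a * c) := by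
      rw [← Real.exp_add]; ring_nf
    calc m * (1 - Real.exp (-a * c)) / a * ((t * Real.log t ^ 2) / ((t + c) * Real.log (t + c) ^ 2))
        = t * Real.log t ^ 2 * Real.exp (a * t) *
          ((Real.exp (-a * t) / a - Real.exp (-a * (t + c)) / a) * (m / ((t + c) * Real.log (t + c) ^ 2))) := by
          have expand : t * Real.log t ^ 2 * Real.exp (a * t) *
              ((Real.exp (-a * t) / a - Real.exp (-a * (t + c)) / a) * (m / ((t + c) * Real.log (t + c) ^ 2)))
              = m * ((Real.exp (a * t) * Real.exp (-a * t)) - (Real.exp (a * t) * Real.exp (-a * (t + c)))) / a *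
                ((t * Real.log t ^ 2) / ((t + c) * Real.log (t + c) ^ 2)) := by ring
          rw [expand, e1, e2]
      _ ≤ t * Real.log t ^ 2 * Real.exp (a * t) * ∫ s in Set.Ioi t, Real.exp (-a * s) * f s := by
          apply mul_le_mul_of_nonneg_left hFge
          positivity
  · -- upper bound
    intro b hb
    have hba : L < b * a := (div_lt_iff₀ ha).1 hb
    set ε : ℝ := (b * a - L) / 2 with hεdef
    have hε : 0 < ε := by rw [hεdef]; linarith
    obtain ⟨T₁, hT₁⟩ := Metric.tendsto_atTop.mp hlim ε hε
    filter_upwards [eventually_ge_atTop (max T₁ T₀)] with t ht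
    have htT₁ : T₁ ≤ t := le_trans (le_max_left _ _) ht
    have htT₀ : T₀ ≤ t := le_trans (le_max_right _ _) ht
    have ht2 : (2:ℝ) ≤ t := le_trans hT₀2 htT₀
    have hφt : 0 < t * Real.log t ^ 2 := phi_pos' ht2
    have key : ∫ s in Set.Ioi t, Real.exp (-a * s) * f s
        ≤ (Real.exp (-a * t) / a) * ((L + ε) / (t * Real.log t ^ 2)) := by
      have step : ∫ s in Set.Ioi t, Real.exp (-a * s) * f s
          ≤ ∫ s in Set.Ioi t, Real.exp (-a * s) * ((L + ε) / (t * Real.log t ^ 2)) := by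
        apply setIntegral_mono_on (hint t htT₀)
          ((exp_neg_integrableOn_Ioi t ha).mul_const _) measurableSet_Ioi
        intro s hs
        simp only [Set.mem_Ioi] at hs
        have hs0 : (0:ℝ) < s := by linarith
        have hfs : 0 ≤ f s := hf0 s (by simpa using hs0)
        have hφs : 0 < s * Real.log s ^ 2 := phi_pos' (by linarith)
        have h1 : |s * Real.log s ^ 2 * f s - L| < ε := by
          simpa [Real.dist_eq] using hT₁ s (by linarith)
        have h2 : s * Real.log s ^ 2 * f s < L + ε := by
          have := abs_lt.1 h1; linarith [this.2]
        have h4 : t * Real.log t ^ 2 * f s ≤ s * Real.log s ^ 2 * f s :=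
          mul_le_mul_of_nonneg_right (phi_mono' (by linarith) hs.le) hfs
        have h5 : f s ≤ (L + ε) / (t * Real.log t ^ 2) := by
          rw [le_div_iff₀ hφt]; nlinarith
        exact mul_le_mul_of_nonneg_left h5 (Real.exp_pos _).le
      rw [integral_mul_const, integral_exp_neg_mul_Ioi' ha] at step
      linarith [step]
    have e1 : Real.exp (a * t) * Real.exp (-a * t) = 1 := by
      rw [← Real.exp_add]; ring_nf; exact Real.exp_zero
    calc t * Real.log t ^ 2 * Real.exp (a * t) * ∫ s in Set.Ioi t, Real.exp (-a * s) * f s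
        ≤ t * Real.log t ^ 2 * Real.exp (a * t) *
          ((Real.exp (-a * t) / a) * ((L + ε) / (t * Real.log t ^ 2))) := by
          apply mul_le_mul_of_nonneg_left key; positivity
      _ = (L + ε) / a := by
          have expand : t * Real.log t ^ 2 * Real.exp (a * t) *
              ((Real.exp (-a * t) / a) * ((L + ε) / (t * Real.log t ^ 2)))
              = (Real.exp (a * t) * Real.exp (-a * t)) * ((L + ε) / a) *
                ((t * Real.log t ^ 2) / (t * Real.log t ^ 2)) := by ring
          rw [expand, e1, div_self hφt.ne', one_mul, mul_one]
      _ < b := by rw [div_lt_iff₀ ha, hεdef]; linarith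

end Aux
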